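/- Let p be prime, r ≥ r' ≥ 1. The number of distinct self-dual isotropic subgroups of D = (ℤ/p^rℤ)² ⊕ (ℤ/p^{r'}ℤ)² (with q(w,x,y,z) = wx/p^r + yz/p^{r'}) of the form H^1_{a,c} or H^2_{a,c} (types of one-dimensional cusps) equals 2((r - r' + 1)p^{r'} - (r - r' - 1)p^{r'-1}). -/

import Mathlib

/-- The finite quadratic module `(ℤ/Nℤ)² ⊕ (ℤ/N'ℤ)²`. -/
abbrev Dty (N N' : ℕ) := (ZMod N × ZMod N) × (ZMod N' × ZMod N')

/-- The quadratic form `q(w,x,y,z) = wx/N + yz/N'` valued in `ℚ/ℤ`. -/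
noncomputable def qD (N N' : ℕ) (x : Dty N N') : AddCircle (1 : ℚ) :=
  ((x.1.1.val * x.1.2.val / (N : ℚ) + x.2.1.val * x.2.2.val / (N' : ℚ) : ℚ) : AddCircle (1 : ℚ))

/-- `M = gcd(N/N', c)`. -/
def Mgcd (N N' : ℕ) (c : ℤ) : ℤ := Nat.gcd (N / N') c.natAbs

/-- The subgroup `H¹_{a,c}` generated by `(Na/(N'M), 0, 0, -c/M)` and `(0, c, a, 0)`. -/
def H1 (N N' : ℕ) (a c : ℤ) : AddSubgroup (Dty N N') :=
  AddSubgroup.closure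
    { (((((N : ℤ) / ((N' : ℤ) * Mgcd N N' c) * a : ℤ) : ZMod N), (0 : ZMod N)),
        ((0 : ZMod N'), ((-(c / Mgcd N N' c) : ℤ) : ZMod N'))),
      (((0 : ZMod N), (c : ZMod N)), ((a : ZMod N'), (0 : ZMod N'))) }

/-- The subgroup `H²_{a,c}` generated by `(Na/(N'M), 0, c/M, 0)` and `(0, c, 0, -a)`. -/
def H2 (N N' : ℕ) (a c : ℤ) : AddSubgroup (Dty N N') :=
  AddSubgroup.closure
    { (((((N : ℤ) / ((N' : ℤ) * Mgcd N N' c) * a : ℤ) : ZMod N), (0 : ZMod N)),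
        (((c / Mgcd N N' c : ℤ) : ZMod N'), (0 : ZMod N'))),
      (((0 : ZMod N), (c : ZMod N)), ((0 : ZMod N'), ((-a : ℤ) : ZMod N'))) }

open AddSubgroup

namespace Stmt5

variable (N N' : ℕ)

/-- The "line" subgroup generated by `((c : ZMod N), (a : ZMod N'))`. -/
def Lp (c a : ℤ) : AddSubgroup (ZMod N × ZMod N') :=
  AddSubgroup.zmultiples ((c : ZMod N), (a : ZMod N'))

lemma smul_cast (m : ℕ) (n x : ℤ) : n • (x : ZMod m) = ((n * x : ℤ) : ZMod m) := by
  rw [zsmul_eq_mul]; push_cast; ring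

lemma mem_Lp {c a : ℤ} {v : ZMod N × ZMod N'} :
    v ∈ Lp N N' c a ↔ ∃ n : ℤ, ((n * c : ℤ) : ZMod N) = v.1 ∧ ((n * a : ℤ) : ZMod N') = v.2 := by
  rw [Lp, mem_zmultiples_iff]
  constructor
  · rintro ⟨n, hn⟩
    exact ⟨n, by rw [← hn, Prod.smul_fst, smul_cast], by rw [← hn, Prod.smul_snd, smul_cast]⟩
  · rintro ⟨n, h₁, h₂⟩
    exact ⟨n, Prod.ext (by rw [Prod.smul_fst, smul_cast, h₁]) (by rw [Prod.smul_snd, smul_cast, h₂])⟩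

lemma pair_mem_Lp {c a c' a' : ℤ} :
    (((c' : ZMod N)), ((a' : ZMod N'))) ∈ Lp N N' c a ↔
      ∃ n : ℤ, ((n * c : ℤ) : ZMod N) = (c' : ZMod N) ∧ ((n * a : ℤ) : ZMod N') = (a' : ZMod N') :=
  mem_Lp N N'

lemma Lp_congr {c a c' a' : ℤ} (h1 : (c : ZMod N) = (c' : ZMod N))
    (h2 : (a : ZMod N') = (a' : ZMod N')) : Lp N N' c a = Lp N N' c' a' := by
  unfold Lp; rw [h1, h2]

lemma Lp_eq_of_mem {c a c' a' : ℤ}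
    (h1 : (((c' : ZMod N)), ((a' : ZMod N'))) ∈ Lp N N' c a)
    (h2 : (((c : ZMod N)), ((a : ZMod N'))) ∈ Lp N N' c' a') :
    Lp N N' c a = Lp N N' c' a' := by
  apply le_antisymm
  · rw [Lp, zmultiples_le]; exact h2
  · rw [Lp, zmultiples_le]; exact h1

lemma Lp_neg (c a : ℤ) : Lp N N' (-c) (-a) = Lp N N' c a := by
  apply Lp_eq_of_mem
  · exact (pair_mem_Lp N N').2 ⟨-1, by push_cast; ring_nf, by push_cast; ring_nf⟩
  · exact (pair_mem_Lp N N').2 ⟨-1, by push_cast; ring_nf, by push_cast; ring_nf⟩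

lemma Lp_scale {c a lam mu : ℤ} (h1 : ((lam * mu : ℤ) : ZMod N) = 1)
    (h2 : ((lam * mu : ℤ) : ZMod N') = 1) :
    Lp N N' (lam * c) (lam * a) = Lp N N' c a := by
  apply Lp_eq_of_mem
  · refine (pair_mem_Lp N N').2 ⟨mu, ?_, ?_⟩
    · have : ((mu * (lam * c) : ℤ) : ZMod N) = ((lam * mu : ℤ) : ZMod N) * (c : ZMod N) := by
        push_cast; ring
      rw [this, h1, one_mul]
    · have : ((mu * (lam * a) : ℤ) : ZMod N') = ((lam * mu : ℤ) : ZMod N') * (a : ZMod N') := by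
        push_cast; ring
      rw [this, h2, one_mul]
  · exact (pair_mem_Lp N N').2 ⟨lam, rfl, rfl⟩

lemma exists_inv {p : ℕ} (hp : p.Prime) {lam : ℤ} (h : ¬ (p:ℤ) ∣ lam) {r' r : ℕ} (hrr : r' ≤ r) :
    ∃ mu : ℤ, ((lam * mu : ℤ) : ZMod (p^r)) = 1 ∧ ((lam * mu : ℤ) : ZMod (p^r')) = 1 := by
  have hnd : ¬ p ∣ lam.natAbs := by rwa [← Int.natCast_dvd]
  have h2 : Nat.Coprime lam.natAbs p := ((Nat.Prime.coprime_iff_not_dvd hp).2 hnd).symm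
  have hcop : IsCoprime lam ((p:ℤ)^r) := by
    rw [Int.isCoprime_iff_gcd_eq_one]
    have : Int.gcd lam ((p:ℤ)^r) = Nat.gcd lam.natAbs (p^r) := by
      rw [Int.gcd]; congr 1
    rw [this]
    exact Nat.Coprime.pow_right r h2
  rcases hcop with ⟨u, v, huv⟩
  refine ⟨u, ?_, ?_⟩
  all_goals {
    have hz : (((p:ℤ)^r : ℤ) : ZMod (p^(min r' r))) = 0 ∧ (((p:ℤ)^r : ℤ) : ZMod (p^r)) = 0 := by
      constructor <;>
      · rw [ZMod.intCast_zmod_eq_zero_iff_dvd]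
        push_cast
        exact pow_dvd_pow _ (by omega)
    have he : lam * u = 1 - v * (p:ℤ)^r := by linarith
    rw [he, Int.cast_sub, Int.cast_mul, Int.cast_one]
    first
    | (rw [hz.2, mul_zero, sub_zero])
    | (rw [show ((((p:ℤ)^r : ℤ)) : ZMod (p^r')) = 0 by
        rw [ZMod.intCast_zmod_eq_zero_iff_dvd]; push_cast; exact pow_dvd_pow _ hrr,
        mul_zero, sub_zero])
  }

/-- rearrangement `((w,z),(x,y)) ↦ ((w,x),(y,z))`. -/
def Eequiv : ((ZMod N × ZMod N') × (ZMod N × ZMod N')) ≃+ Dty N N' where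
  toFun x := ((x.1.1, x.2.1), (x.2.2, x.1.2))
  invFun y := ((y.1.1, y.2.2), (y.1.2, y.2.1))
  left_inv x := rfl
  right_inv y := rfl
  map_add' x y := rfl

/-- rearrangement `((w,y),(x,z)) ↦ ((w,x),(y,z))`. -/
def Fequiv : ((ZMod N × ZMod N') × (ZMod N × ZMod N')) ≃+ Dty N N' where
  toFun x := ((x.1.1, x.2.1), (x.1.2, x.2.2))
  invFun y := ((y.1.1, y.2.1), (y.1.2, y.2.2))
  left_inv x := rfl
  right_inv y := rfl
  map_add' x y := rfl

lemma prod_zmultiples {G H : Type*} [AddCommGroup G] [AddCommGroup H] (g : G) (h : H) :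
    (zmultiples g).prod (zmultiples h) = closure {((g, 0) : G × H), (0, h)} := by
  apply le_antisymm
  · rintro ⟨x, y⟩ hv
    obtain ⟨hv1, hv2⟩ := mem_prod.1 hv
    obtain ⟨m, hm⟩ := mem_zmultiples_iff.1 hv1
    obtain ⟨n, hn⟩ := mem_zmultiples_iff.1 hv2
    have : (x, y) = m • ((g,0) : G × H) + n • ((0,h) : G × H) := by
      simp only [Prod.smul_mk, Prod.mk_add_mk, smul_zero, add_zero, zero_add]
      rw [hm, hn]
    rw [this]
    exact add_mem (zsmul_mem (subset_closure (by simp)) m)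
      (zsmul_mem (subset_closure (by simp)) n)
  · rw [closure_le]
    rintro v hv
    simp only [Set.mem_insert_iff, Set.mem_singleton_iff] at hv
    rcases hv with rfl | rfl
    · exact mem_prod.2 ⟨mem_zmultiples g, zero_mem _⟩
    · exact mem_prod.2 ⟨zero_mem _, mem_zmultiples h⟩

lemma H1_eq (a c : ℤ) :
    H1 N N' a c =
      ((Lp N N' ((N : ℤ) / ((N' : ℤ) * Mgcd N N' c) * a) (-(c / Mgcd N N' c))).prod
        (Lp N N' c a)).map (Eequiv N N').toAddMonoidHom := by
  rw [Lp, Lp, prod_zmultiples, AddMonoidHom.map_closure, Set.image_insert_eq,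
    Set.image_singleton]
  rfl

lemma H2_eq (a c : ℤ) :
    H2 N N' a c =
      ((Lp N N' ((N : ℤ) / ((N' : ℤ) * Mgcd N N' c) * a) (c / Mgcd N N' c)).prod
        (Lp N N' c (-a))).map (Fequiv N N').toAddMonoidHom := by
  rw [Lp, Lp, prod_zmultiples, AddMonoidHom.map_closure, Set.image_insert_eq,
    Set.image_singleton]
  rfl

lemma prod_eq_iff {G H : Type*} [AddGroup G] [AddGroup H] {A C : AddSubgroup G}
    {B D : AddSubgroup H} : A.prod B = C.prod D ↔ A = C ∧ B = D := by
  constructor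
  · intro h
    constructor
    · ext x
      have e := SetLike.ext_iff.1 h (x, 0)
      exact ⟨fun hx => (mem_prod.1 (e.1 (mem_prod.2 ⟨hx, zero_mem _⟩))).1,
        fun hx => (mem_prod.1 (e.2 (mem_prod.2 ⟨hx, zero_mem _⟩))).1⟩
    · ext y
      have e := SetLike.ext_iff.1 h (0, y)
      exact ⟨fun hy => (mem_prod.1 (e.1 (mem_prod.2 ⟨zero_mem _, hy⟩))).2,
        fun hy => (mem_prod.1 (e.2 (mem_prod.2 ⟨zero_mem _, hy⟩))).2⟩
  · rintro ⟨rfl, rfl⟩; rfl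

lemma H1_eq_H1_iff (a c a₂ c₂ : ℤ) :
    H1 N N' a c = H1 N N' a₂ c₂ ↔
      (Lp N N' ((N : ℤ) / ((N' : ℤ) * Mgcd N N' c) * a) (-(c / Mgcd N N' c)) =
        Lp N N' ((N : ℤ) / ((N' : ℤ) * Mgcd N N' c₂) * a₂) (-(c₂ / Mgcd N N' c₂))) ∧
      Lp N N' c a = Lp N N' c₂ a₂ := by
  rw [H1_eq, H1_eq, ← prod_eq_iff]
  constructor
  · intro h
    exact AddSubgroup.map_injective (Eequiv N N').injective h
  · intro h; rw [h]

lemma Lp_congr' {c a c' a' : ℤ} (hc : c ≡ c' [ZMOD (N:ℤ)]) (ha : a ≡ a' [ZMOD (N':ℤ)]) :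
    Lp N N' c a = Lp N N' c' a' :=
  Lp_congr N N' ((ZMod.intCast_eq_intCast_iff _ _ _).2 hc)
    ((ZMod.intCast_eq_intCast_iff _ _ _).2 ha)

lemma Lp_mem' {c a c' a' : ℤ} (n : ℤ) (hc : n * c ≡ c' [ZMOD (N:ℤ)])
    (ha : n * a ≡ a' [ZMOD (N':ℤ)]) : ((c' : ZMod N), (a' : ZMod N')) ∈ Lp N N' c a :=
  (pair_mem_Lp N N').2 ⟨n, (ZMod.intCast_eq_intCast_iff _ _ _).2 hc,
    (ZMod.intCast_eq_intCast_iff _ _ _).2 ha⟩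

lemma Lp_eq' {c a c' a' : ℤ} (n m : ℤ)
    (h1 : n * c ≡ c' [ZMOD (N:ℤ)]) (h2 : n * a ≡ a' [ZMOD (N':ℤ)])
    (h3 : m * c' ≡ c [ZMOD (N:ℤ)]) (h4 : m * a' ≡ a [ZMOD (N':ℤ)]) :
    Lp N N' c a = Lp N N' c' a' :=
  Lp_eq_of_mem N N' (Lp_mem' N N' n h1 h2) (Lp_mem' N N' m h3 h4)

lemma Lp_eq_elim {c a c' a' : ℤ} (h : Lp N N' c a = Lp N N' c' a') :
    ∃ n : ℤ, n * c ≡ c' [ZMOD (N:ℤ)] ∧ n * a ≡ a' [ZMOD (N':ℤ)] := by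
  have : ((c' : ZMod N), (a' : ZMod N')) ∈ Lp N N' c a := by
    rw [h]
    exact Lp_mem' N N' 1 (by rw [one_mul]) (by rw [one_mul])
  obtain ⟨n, hn1, hn2⟩ := (pair_mem_Lp N N').1 this
  exact ⟨n, (ZMod.intCast_eq_intCast_iff _ _ _).1 hn1, (ZMod.intCast_eq_intCast_iff _ _ _).1 hn2⟩

lemma Lp_elim {c a c' a' : ℤ} (h : ((c' : ZMod N), (a' : ZMod N')) ∈ Lp N N' c a) :
    ∃ n : ℤ, n * c ≡ c' [ZMOD (N:ℤ)] ∧ n * a ≡ a' [ZMOD (N':ℤ)] := by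
  obtain ⟨n, h1, h2⟩ := (pair_mem_Lp N N').1 h
  exact ⟨n, (ZMod.intCast_eq_intCast_iff _ _ _).1 h1, (ZMod.intCast_eq_intCast_iff _ _ _).1 h2⟩

lemma mem_H1 (a c : ℤ) (v : Dty N N') :
    v ∈ H1 N N' a c ↔
      (v.1.1, v.2.2) ∈ Lp N N' ((N : ℤ) / ((N' : ℤ) * Mgcd N N' c) * a) (-(c / Mgcd N N' c)) ∧
      (v.1.2, v.2.1) ∈ Lp N N' c a := by
  rw [H1_eq, mem_map_equiv, mem_prod]
  exact Iff.rfl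

lemma mem_H2 (a c : ℤ) (v : Dty N N') :
    v ∈ H2 N N' a c ↔
      (v.1.1, v.2.1) ∈ Lp N N' ((N : ℤ) / ((N' : ℤ) * Mgcd N N' c) * a) (c / Mgcd N N' c) ∧
      (v.1.2, v.2.2) ∈ Lp N N' c (-a) := by
  rw [H2_eq, mem_map_equiv, mem_prod]
  exact Iff.rfl

lemma modeq_ex {M x y : ℤ} (h : x ≡ y [ZMOD M]) : ∃ z : ℤ, x = y + M * z := by
  obtain ⟨z, hz⟩ := Int.ModEq.dvd h
  exact ⟨-z, by linarith⟩

lemma modeq_of_ex {M x y : ℤ} (z : ℤ) (h : x - y = M * z) : x ≡ y [ZMOD M] :=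
  Int.ModEq.symm ((Int.modEq_iff_dvd).2 ⟨z, h⟩)

section Padic

variable {p r r' : ℕ}

lemma iscoprime_pow (hp : p.Prime) {c : ℤ} (hc : ¬ (p:ℤ) ∣ c) (m : ℕ) :
    IsCoprime ((p:ℤ)^m) c := by
  have hnd : ¬ p ∣ c.natAbs := by rwa [← Int.natCast_dvd]
  have h2 : Nat.Coprime p c.natAbs := (Nat.Prime.coprime_iff_not_dvd hp).2 hnd
  rw [Int.isCoprime_iff_gcd_eq_one]
  have : Int.gcd ((p:ℤ)^m) c = Nat.gcd (p^m) c.natAbs := by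
    rw [Int.gcd]; congr 1
  rw [this]
  exact Nat.Coprime.pow_left m h2

lemma exists_inv' (hp : p.Prime) {lam : ℤ} (h : ¬ (p:ℤ) ∣ lam) (hrr : r' ≤ r) :
    ∃ mu : ℤ, lam * mu ≡ 1 [ZMOD ((p^r : ℕ) : ℤ)] ∧ lam * mu ≡ 1 [ZMOD ((p^r' : ℕ) : ℤ)] := by
  obtain ⟨mu, h1, h2⟩ := exists_inv hp h hrr
  refine ⟨mu, ?_, ?_⟩
  · have := (ZMod.intCast_eq_intCast_iff (lam * mu) 1 (p^r)).1 (by rw [h1]; simp)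
    exact this
  · have := (ZMod.intCast_eq_intCast_iff (lam * mu) 1 (p^r')).1 (by rw [h2]; simp)
    exact this

lemma gcd_pow_mul (hp : p.Prime) {k m d : ℕ} (hk : k ≤ m) (hd : ¬ p ∣ d) :
    Nat.gcd (p^m) (p^k * d) = p^k := by
  apply Nat.dvd_antisymm
  · obtain ⟨j, hj, he⟩ := (Nat.dvd_prime_pow hp).1 (Nat.gcd_dvd_left (p^m) (p^k * d))
    rw [he]
    by_contra hc
    have hjk : k < j := by
      rcases Nat.lt_or_ge k j with h' | h'
      · exact h'
      · exact absurd (pow_dvd_pow p h') hc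
    have : p^(k+1) ∣ p^k * d := dvd_trans (pow_dvd_pow p hjk) (he ▸ Nat.gcd_dvd_right _ _)
    rw [pow_succ] at this
    have := (Nat.mul_dvd_mul_iff_left (pow_pos hp.pos k)).1 this
    exact hd this
  · exact Nat.dvd_gcd (pow_dvd_pow p hk) (Dvd.dvd.mul_right (dvd_refl _) d)

lemma natAbs_pow_mul {k : ℕ} {d : ℤ} : ((p:ℤ)^k * d).natAbs = p^k * d.natAbs := by
  rw [Int.natAbs_mul, Int.natAbs_pow]; simp

lemma Mgcd_mid (hp : p.Prime) (hrr : r' ≤ r) {k : ℕ} {c d : ℤ} (hk : k ≤ r - r')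
    (hcd : c = (p:ℤ)^k * d) (hd : ¬ (p:ℤ) ∣ d) :
    Mgcd (p^r) (p^r') c = (p:ℤ)^k := by
  have hnd : ¬ p ∣ d.natAbs := by rwa [← Int.natCast_dvd]
  rw [Mgcd, Nat.pow_div hrr hp.pos, hcd, natAbs_pow_mul, gcd_pow_mul hp hk hnd]
  simp

lemma Mgcd_top (hp : p.Prime) (hrr : r' ≤ r) {c : ℤ} (hc : ((p^(r-r') : ℕ) : ℤ) ∣ c) :
    Mgcd (p^r) (p^r') c = (p:ℤ)^(r-r') := by
  rw [Mgcd, Nat.pow_div hrr hp.pos, Nat.gcd_eq_left (by rwa [Int.natCast_dvd] at hc)]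
  simp

lemma Mgcd_one (hp : p.Prime) (hrr : r' ≤ r) {c : ℤ} (hc : ¬ (p:ℤ) ∣ c) :
    Mgcd (p^r) (p^r') c = 1 := by
  have hnd : ¬ p ∣ c.natAbs := by rwa [← Int.natCast_dvd]
  have h2 : Nat.Coprime p c.natAbs := (Nat.Prime.coprime_iff_not_dvd hp).2 hnd
  rw [Mgcd, Nat.pow_div hrr hp.pos]
  rw [Nat.Coprime.pow_left (r - r') h2]
  simp

lemma coefdiv (hp : p.Prime) (hrr : r' ≤ r) {k : ℕ} (hk : k ≤ r - r') :
    ((p^r : ℕ) : ℤ) / (((p^r' : ℕ) : ℤ) * (p:ℤ)^k) = (p:ℤ)^(r-r'-k) := by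
  have he : ((p^r : ℕ) : ℤ) = (((p^r' : ℕ) : ℤ) * (p:ℤ)^k) * (p:ℤ)^(r-r'-k) := by
    push_cast
    rw [← pow_add, ← pow_add]
    congr 1
    omega
  rw [he, Int.mul_ediv_cancel_left]
  have hpp := hp.pos
  have : (0:ℤ) < ((p^r' : ℕ) : ℤ) * (p:ℤ)^k := by positivity
  exact this.ne'

end Padic

section Main

variable {p r r' : ℕ}

lemma pdvd_contra (hp : p.Prime) {M x : ℤ} (h : x ≡ 1 [ZMOD M]) (hpM : (p:ℤ) ∣ M)
    (hpx : (p:ℤ) ∣ x) : False := by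
  obtain ⟨z, hz⟩ := modeq_ex h
  have hd1 : (p:ℤ) ∣ 1 := by
    have he : (1:ℤ) = x - M * z := by linarith
    rw [he]
    exact dvd_sub hpx (Dvd.dvd.mul_right hpM z)
  have hple := Int.le_of_dvd one_pos hd1
  have := hp.two_le
  omega

lemma coprime_not_both (hp : p.Prime) {a c : ℤ} (hcop : Int.gcd a c = 1)
    (ha : (p:ℤ) ∣ a) : ¬ (p:ℤ) ∣ c := by
  intro hc
  have hd : (p:ℤ) ∣ ↑(Int.gcd a c) := Int.dvd_coe_gcd ha hc
  rw [hcop] at hd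
  have hple := Int.le_of_dvd one_pos hd
  have := hp.two_le
  omega

lemma split_lemma (hp : p.Prime) (h1 : 1 ≤ r') (hrr : r' ≤ r) {a c : ℤ}
    (hcop : Int.gcd a c = 1)
    (hx : ∃ n : ℤ, n * c ≡ c [ZMOD ((p^r:ℕ):ℤ)] ∧ n * a ≡ 0 [ZMOD ((p^r':ℕ):ℤ)])
    (hy : ∃ n : ℤ, n * c ≡ 0 [ZMOD ((p^r:ℕ):ℤ)] ∧ n * a ≡ a [ZMOD ((p^r':ℕ):ℤ)]) :
    ((p^r':ℕ):ℤ) ∣ a ∨ ((p^r:ℕ):ℤ) ∣ c := by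
  have hcast : ((p^r:ℕ):ℤ) = (p:ℤ)^r := by push_cast; ring
  have hcast' : ((p^r':ℕ):ℤ) = (p:ℤ)^r' := by push_cast; ring
  have hPP' : ((p^r':ℕ):ℤ) ∣ ((p^r:ℕ):ℤ) := by
    rw [hcast, hcast']; exact pow_dvd_pow _ hrr
  have hpP' : (p:ℤ) ∣ ((p^r':ℕ):ℤ) := by
    rw [hcast']; exact dvd_pow_self _ (by omega)
  have hpa_or : ¬ (p:ℤ) ∣ a ∨ ¬ (p:ℤ) ∣ c := by
    by_contra hcon
    push_neg at hcon
    exact coprime_not_both hp hcop hcon.1 hcon.2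
  rcases hpa_or with hpa | hpc
  · -- ¬ p ∣ a : conclude p^r ∣ c
    right
    obtain ⟨n, hn1, hn2⟩ := hy
    have d1 : ((p^r':ℕ):ℤ) ∣ (n - 1) * a := by
      have hd := Int.ModEq.dvd hn2
      have e : (n-1)*a = -(a - n*a) := by ring
      rw [e]; exact dvd_neg.2 hd
    have d2 : ((p^r':ℕ):ℤ) ∣ (n - 1) := by
      rw [hcast'] at d1 ⊢
      exact (iscoprime_pow hp hpa r').dvd_of_dvd_mul_right d1
    have hpn : ¬ (p:ℤ) ∣ n := by
      intro hpn
      obtain ⟨z, hz⟩ := dvd_trans hpP' d2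
      have : (p:ℤ) ∣ 1 := by
        have he : (1:ℤ) = n - (p:ℤ)*z := by linarith
        rw [he]; exact dvd_sub hpn (Dvd.dvd.mul_right dvd_rfl z)
      have hple := Int.le_of_dvd one_pos this
      have := hp.two_le
      omega
    have d3 : ((p^r:ℕ):ℤ) ∣ n * c := by
      have := Int.ModEq.dvd hn1
      simpa using (dvd_neg.2 this)
    rw [hcast] at d3 ⊢
    exact (iscoprime_pow hp hpn r).dvd_of_dvd_mul_left d3
  · -- ¬ p ∣ c : conclude p^{r'} ∣ a
    left
    obtain ⟨n, hn1, hn2⟩ := hx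
    have d1 : ((p^r:ℕ):ℤ) ∣ (n - 1) * c := by
      have hd := Int.ModEq.dvd hn1
      have e : (n-1)*c = -(c - n*c) := by ring
      rw [e]; exact dvd_neg.2 hd
    have d2 : ((p^r:ℕ):ℤ) ∣ (n - 1) := by
      rw [hcast] at d1 ⊢
      exact (iscoprime_pow hp hpc r).dvd_of_dvd_mul_right d1
    have d2' : ((p^r':ℕ):ℤ) ∣ (n - 1) := dvd_trans hPP' d2
    have d3 : ((p^r':ℕ):ℤ) ∣ n * a := by
      have := Int.ModEq.dvd hn2
      simpa using (dvd_neg.2 this)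
    have : a = n * a - (n - 1) * a := by ring
    rw [this]
    exact dvd_sub d3 (Dvd.dvd.mul_right d2' a)

end Main

section Disj

variable {p r r' : ℕ}

lemma gcd_neg_left (a c : ℤ) : Int.gcd (-a) c = Int.gcd a c := by
  simp [Int.gcd]

theorem H1_ne_H2 (hp : p.Prime) (h1 : 1 ≤ r') (hrr : r' ≤ r) {a c a' c' : ℤ}
    (hcop : Int.gcd a c = 1) (hcop' : Int.gcd a' c' = 1) :
    H1 (p^r) (p^r') a c ≠ H2 (p^r) (p^r') a' c' := by
  intro h
  have hcast : ((p^r:ℕ):ℤ) = (p:ℤ)^r := by push_cast; ring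
  have hcast' : ((p^r':ℕ):ℤ) = (p:ℤ)^r' := by push_cast; ring
  have hsplit : ((p^r:ℕ):ℤ) = (p:ℤ)^(r-r') * ((p^r':ℕ):ℤ) := by
    rw [hcast, hcast', ← pow_add]; congr 1; omega
  have hPP' : ((p^r':ℕ):ℤ) ∣ ((p^r:ℕ):ℤ) := by rw [hcast, hcast']; exact pow_dvd_pow _ hrr
  have hpP' : (p:ℤ) ∣ ((p^r':ℕ):ℤ) := by rw [hcast']; exact dvd_pow_self _ (by omega)
  have hpne : ((p:ℤ)^(r-r')) ≠ 0 := by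
    have := hp.pos
    positivity
  have key : ∀ v : Dty (p^r) (p^r'), v ∈ H1 (p^r) (p^r') a c ↔ v ∈ H2 (p^r) (p^r') a' c' :=
    fun v => by rw [h]
  have hzz : ∀ (x y : ℤ),
      ((((0:ℤ)):ZMod (p^r)), (((0:ℤ)):ZMod (p^r'))) ∈ Lp (p^r) (p^r') x y :=
    fun x y => Lp_mem' _ _ 0 (by rw [zero_mul]) (by rw [zero_mul])
  -- Step A : push generator of T' through
  have hv₁ : (((((0:ℤ):ZMod (p^r)), ((c':ℤ):ZMod (p^r))),
      (((0:ℤ):ZMod (p^r')), ((-a':ℤ):ZMod (p^r')))) : Dty (p^r) (p^r')) ∈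
        H2 (p^r) (p^r') a' c' := by
    rw [mem_H2]
    exact ⟨hzz _ _, Lp_mem' _ _ 1 (by rw [one_mul]) (by rw [one_mul])⟩
  have hA := (mem_H1 (p^r) (p^r') a c _).1 ((key _).2 hv₁)
  -- Step B
  have hw₁ : (((((0:ℤ):ZMod (p^r)), ((c':ℤ):ZMod (p^r))),
      (((0:ℤ):ZMod (p^r')), (((0:ℤ)):ZMod (p^r')))) : Dty (p^r) (p^r')) ∈
        H1 (p^r) (p^r') a c := by
    rw [mem_H1]
    exact ⟨hzz _ _, hA.2⟩
  have hB := ((mem_H2 (p^r) (p^r') a' c' _).1 ((key _).1 hw₁)).2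
  -- Step C
  have hw₂ : (((((0:ℤ):ZMod (p^r)), (((0:ℤ)):ZMod (p^r))),
      (((0:ℤ):ZMod (p^r')), ((-a':ℤ):ZMod (p^r')))) : Dty (p^r) (p^r')) ∈
        H1 (p^r) (p^r') a c := by
    rw [mem_H1]
    exact ⟨hA.1, hzz _ _⟩
  have hC := ((mem_H2 (p^r) (p^r') a' c' _).1 ((key _).1 hw₂)).2
  have split₂ : ((p^r':ℕ):ℤ) ∣ a' ∨ ((p^r:ℕ):ℤ) ∣ c' := by
    have hs := split_lemma hp h1 hrr (a := -a') (c := c')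
      (by rw [gcd_neg_left]; exact hcop') (Lp_elim _ _ hB) (Lp_elim _ _ hC)
    exact hs.imp (fun hd => dvd_neg.1 hd) id
  -- Step D : symmetric
  have hv₂ : (((((0:ℤ):ZMod (p^r)), ((c:ℤ):ZMod (p^r))),
      (((a:ℤ)):ZMod (p^r')), (((0:ℤ)):ZMod (p^r'))) : Dty (p^r) (p^r')) ∈
        H1 (p^r) (p^r') a c := by
    rw [mem_H1]
    exact ⟨hzz _ _, Lp_mem' _ _ 1 (by rw [one_mul]) (by rw [one_mul])⟩
  have hD := (mem_H2 (p^r) (p^r') a' c' _).1 ((key _).1 hv₂)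
  have hw₃ : (((((0:ℤ):ZMod (p^r)), ((c:ℤ):ZMod (p^r))),
      (((0:ℤ):ZMod (p^r')), (((0:ℤ)):ZMod (p^r')))) : Dty (p^r) (p^r')) ∈
        H2 (p^r) (p^r') a' c' := by
    rw [mem_H2]
    exact ⟨hzz _ _, hD.2⟩
  have hx₁ := ((mem_H1 (p^r) (p^r') a c _).1 ((key _).2 hw₃)).2
  have hw₄ : (((((0:ℤ):ZMod (p^r)), (((0:ℤ)):ZMod (p^r))),
      (((a:ℤ)):ZMod (p^r')), (((0:ℤ)):ZMod (p^r'))) : Dty (p^r) (p^r')) ∈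
        H2 (p^r) (p^r') a' c' := by
    rw [mem_H2]
    exact ⟨hD.1, hzz _ _⟩
  have hy₁ := ((mem_H1 (p^r) (p^r') a c _).1 ((key _).2 hw₄)).2
  have split₁ : ((p^r':ℕ):ℤ) ∣ a ∨ ((p^r:ℕ):ℤ) ∣ c :=
    split_lemma hp h1 hrr hcop (Lp_elim _ _ hx₁) (Lp_elim _ _ hy₁)
  -- helpers to normalize the S components
  have etop : ∀ x : ℤ, ((p^r:ℕ):ℤ)/(((p^r':ℕ):ℤ) * (p:ℤ)^(r-r')) * x = x := by
    intro x
    rw [coefdiv hp hrr (le_refl _), Nat.sub_self, pow_zero, one_mul]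
  have ezero : ∀ x : ℤ, ((p^r:ℕ):ℤ)/(((p^r':ℕ):ℤ) * 1) * x = (p:ℤ)^(r-r') * x := by
    intro x
    have hc0 := coefdiv hp hrr (p := p) (r := r) (r' := r') (k := 0) (Nat.zero_le _)
    rw [pow_zero] at hc0
    rw [hc0, Nat.sub_zero]
  have eγ : ∀ t : ℤ, (((p^r:ℕ):ℤ) * t) / ((p:ℤ)^(r-r')) = ((p^r':ℕ):ℤ) * t := by
    intro t
    rw [hsplit, mul_assoc, Int.mul_ediv_cancel_left _ hpne]
  rcases split₁ with hA1 | hC1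
  · -- p^{r'} ∣ a ; hence p ∤ c, M = 1
    obtain ⟨s, rfl⟩ := hA1
    have hpa : (p:ℤ) ∣ ((p^r':ℕ):ℤ) * s := Dvd.dvd.mul_right hpP' s
    have hpc : ¬ (p:ℤ) ∣ c := coprime_not_both hp hcop hpa
    have hM : Mgcd (p^r) (p^r') c = 1 := Mgcd_one hp hrr hpc
    obtain ⟨μ, hμr, hμr'⟩ := exists_inv' hp hpc hrr
    rcases split₂ with hA2 | hB2
    · -- both a-divisible : element ((0,0),(0,1)) ∈ H1 \ H2
      have hv : (((((0:ℤ):ZMod (p^r)), (((0:ℤ)):ZMod (p^r))),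
          (((0:ℤ):ZMod (p^r')), (((1:ℤ)):ZMod (p^r')))) : Dty (p^r) (p^r')) ∈
            H1 (p^r) (p^r') (((p^r':ℕ):ℤ) * s) c := by
        rw [mem_H1]
        refine ⟨?_, hzz _ _⟩
        rw [hM, Int.ediv_one, ezero]
        refine Lp_mem' _ _ (-μ) ?_ ?_
        · rw [Int.modEq_zero_iff_dvd]
          exact ⟨-(μ*s), by rw [hsplit]; ring⟩
        · have he2 : (-μ) * (-c) = c * μ := by ring
          rw [he2]
          exact hμr'
      have hT' := ((mem_H2 (p^r) (p^r') a' c' _).1 ((key _).1 hv)).2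
      obtain ⟨n, _, hn2⟩ := Lp_elim _ _ hT'
      exact pdvd_contra hp hn2 hpP'
        (Dvd.dvd.mul_left (dvd_neg.2 (dvd_trans hpP' hA2)) n)
    · -- a side div, c' side div : element ((1,0),(0,0)) ∈ H2 \ H1
      obtain ⟨t, rfl⟩ := hB2
      have hpc' : (p:ℤ) ∣ ((p^r:ℕ):ℤ) * t := Dvd.dvd.mul_right (dvd_trans hpP' hPP') t
      have hpa' : ¬ (p:ℤ) ∣ a' := by
        have hcop'' : Int.gcd (((p^r:ℕ):ℤ) * t) a' = 1 := by rw [Int.gcd_comm]; exact hcop'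
        exact coprime_not_both hp hcop'' hpc'
      obtain ⟨ν, hνr, hνr'⟩ := exists_inv' hp hpa' hrr
      have hM' : Mgcd (p^r) (p^r') (((p^r:ℕ):ℤ) * t) = (p:ℤ)^(r-r') := by
        apply Mgcd_top hp hrr
        exact Dvd.dvd.mul_right (Int.natCast_dvd_natCast.2 (pow_dvd_pow p (by omega))) t
      have hv : (((((1:ℤ):ZMod (p^r)), (((0:ℤ)):ZMod (p^r))),
          (((0:ℤ):ZMod (p^r')), (((0:ℤ)):ZMod (p^r')))) : Dty (p^r) (p^r')) ∈
            H2 (p^r) (p^r') a' (((p^r:ℕ):ℤ) * t) := by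
        rw [mem_H2]
        refine ⟨?_, hzz _ _⟩
        rw [hM', etop, eγ]
        refine Lp_mem' _ _ ν ?_ ?_
        · have he2 : ν * a' = a' * ν := by ring
          rw [he2]; exact hνr
        · rw [Int.modEq_zero_iff_dvd]
          exact ⟨ν * t, by ring⟩
      have hS := ((mem_H1 (p^r) (p^r') (((p^r':ℕ):ℤ) * s) c _).1 ((key _).2 hv)).1
      rw [hM, Int.ediv_one, ezero] at hS
      obtain ⟨n, hn1, _⟩ := Lp_elim _ _ hS
      refine pdvd_contra hp hn1 (by rw [hcast]; exact dvd_pow_self _ (by omega)) ?_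
      exact dvd_mul_of_dvd_right (dvd_mul_of_dvd_right hpa _) n
  · -- p^r ∣ c
    obtain ⟨t, rfl⟩ := hC1
    have hpc : (p:ℤ) ∣ ((p^r:ℕ):ℤ) * t := Dvd.dvd.mul_right (dvd_trans hpP' hPP') t
    have hpa : ¬ (p:ℤ) ∣ a := by
      have hcop'' : Int.gcd (((p^r:ℕ):ℤ) * t) a = 1 := by rw [Int.gcd_comm]; exact hcop
      exact coprime_not_both hp hcop'' hpc
    obtain ⟨μ, hμr, hμr'⟩ := exists_inv' hp hpa hrr
    have hM : Mgcd (p^r) (p^r') (((p^r:ℕ):ℤ) * t) = (p:ℤ)^(r-r') := by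
      apply Mgcd_top hp hrr
      exact Dvd.dvd.mul_right (Int.natCast_dvd_natCast.2 (pow_dvd_pow p (by omega))) t
    rcases split₂ with hA2 | hB2
    · -- c div, a' div : element ((1,0),(0,0)) ∈ H1 \ H2
      have hv : (((((1:ℤ):ZMod (p^r)), (((0:ℤ)):ZMod (p^r))),
          (((0:ℤ):ZMod (p^r')), (((0:ℤ)):ZMod (p^r')))) : Dty (p^r) (p^r')) ∈
            H1 (p^r) (p^r') a (((p^r:ℕ):ℤ) * t) := by
        rw [mem_H1]
        refine ⟨?_, hzz _ _⟩
        rw [hM, etop, eγ]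
        refine Lp_mem' _ _ μ ?_ ?_
        · have he2 : μ * a = a * μ := by ring
          rw [he2]; exact hμr
        · rw [Int.modEq_zero_iff_dvd]
          exact ⟨-(μ * t), by ring⟩
      have hS' := ((mem_H2 (p^r) (p^r') a' c' _).1 ((key _).1 hv)).1
      have hpa' : (p:ℤ) ∣ a' := dvd_trans hpP' hA2
      have hpc' : ¬ (p:ℤ) ∣ c' := coprime_not_both hp hcop' hpa'
      have hM' : Mgcd (p^r) (p^r') c' = 1 := Mgcd_one hp hrr hpc'
      rw [hM', Int.ediv_one, ezero] at hS'
      obtain ⟨n, hn1, _⟩ := Lp_elim _ _ hS'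
      refine pdvd_contra hp hn1 (by rw [hcast]; exact dvd_pow_self _ (by omega)) ?_
      exact dvd_mul_of_dvd_right (dvd_mul_of_dvd_right hpa' _) n
    · -- c div, c' div : element ((0,0),(1,0)) ∈ H1, S'-fact gives contradiction
      obtain ⟨t', rfl⟩ := hB2
      have hv : (((((0:ℤ):ZMod (p^r)), (((0:ℤ)):ZMod (p^r))),
          (((1:ℤ):ZMod (p^r')), (((0:ℤ)):ZMod (p^r')))) : Dty (p^r) (p^r')) ∈
            H1 (p^r) (p^r') a (((p^r:ℕ):ℤ) * t) := by
        rw [mem_H1]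
        refine ⟨hzz _ _, ?_⟩
        refine Lp_mem' _ _ μ ?_ ?_
        · rw [Int.modEq_zero_iff_dvd]
          exact ⟨μ * t, by ring⟩
        · have he2 : μ * a = a * μ := by ring
          rw [he2]; exact hμr'
      have hS' := ((mem_H2 (p^r) (p^r') a' (((p^r:ℕ):ℤ) * t') _).1 ((key _).1 hv)).1
      have hM' : Mgcd (p^r) (p^r') (((p^r:ℕ):ℤ) * t') = (p:ℤ)^(r-r') := by
        apply Mgcd_top hp hrr
        exact Dvd.dvd.mul_right (Int.natCast_dvd_natCast.2 (pow_dvd_pow p (by omega))) t'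
      rw [hM', etop, eγ] at hS'
      obtain ⟨n, _, hn2⟩ := Lp_elim _ _ hS'
      refine pdvd_contra hp hn2 hpP' ?_
      exact Dvd.dvd.mul_left (Dvd.dvd.mul_right hpP' t') n

end Disj


section Reduce

variable {p r r' : ℕ}

lemma p_not_dvd_one (hp : p.Prime) : ¬ (p:ℤ) ∣ 1 := by
  intro h
  have h2 := Int.le_of_dvd one_pos h
  have := hp.two_le
  omega

theorem reduce (hp : p.Prime) (h1 : 1 ≤ r') (hrr : r' ≤ r) {a c : ℤ}
    (hcop : Int.gcd a c = 1) (hc0 : 0 ≤ c) :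
    (∃ t : ℕ, t < p^r' ∧ H1 (p^r) (p^r') a c = H1 (p^r) (p^r') (t:ℤ) 1) ∨
    (∃ k u : ℕ, 1 ≤ k ∧ k ≤ r - r' ∧ u < p^r' ∧ ¬ p ∣ u ∧
      H1 (p^r) (p^r') a c = H1 (p^r) (p^r') 1 ((p:ℤ)^k * (u:ℤ))) ∨
    (∃ w : ℕ, w < p^(r'-1) ∧
      H1 (p^r) (p^r') a c = H1 (p^r) (p^r') 1 ((p:ℤ)^(r-r'+1) * (w:ℤ))) := by
  have hppos := hp.pos
  have hP'pos : (0:ℤ) < ((p^r':ℕ):ℤ) := by positivity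
  have hPpos : (0:ℤ) < ((p^r:ℕ):ℤ) := by positivity
  have hsplit : ((p^r:ℕ):ℤ) = (p:ℤ)^(r-r') * ((p^r':ℕ):ℤ) := by
    push_cast
    rw [← pow_add]
    congr 1
    omega
  have hpne : ((p:ℤ)^(r-r')) ≠ 0 := by positivity
  have ezero : ∀ x : ℤ, ((p^r:ℕ):ℤ)/(((p^r':ℕ):ℤ) * 1) * x = (p:ℤ)^(r-r') * x := by
    intro x
    have hc0' := coefdiv hp hrr (p := p) (r := r) (r' := r') (k := 0) (Nat.zero_le _)
    rw [pow_zero] at hc0'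
    rw [hc0', Nat.sub_zero]
  have etop : ∀ x : ℤ, ((p^r:ℕ):ℤ)/(((p^r':ℕ):ℤ) * (p:ℤ)^(r-r')) * x = x := by
    intro x
    rw [coefdiv hp hrr (le_refl _), Nat.sub_self, pow_zero, one_mul]
  by_cases hpc : (p:ℤ) ∣ c
  · -- p ∣ c, so p ∤ a
    have hcop'' : Int.gcd c a = 1 := by rw [Int.gcd_comm]; exact hcop
    have hpa : ¬ (p:ℤ) ∣ a := coprime_not_both hp hcop'' hpc
    obtain ⟨μ, hμr, hμr'⟩ := exists_inv' hp hpa hrr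
    obtain ⟨za, hza⟩ := modeq_ex hμr
    rw [hsplit] at hza
    by_cases hdvd2 : ((p^(r-r'+1):ℕ):ℤ) ∣ c
    · -- high-valuation branch
      right; right
      have ecast2 : ((p^(r-r'+1):ℕ):ℤ) = (p:ℤ)^(r-r') * (p:ℤ) := by push_cast; ring
      have hC0 : 0 ≤ (c * μ) % ((p^r:ℕ):ℤ) := Int.emod_nonneg _ (by omega)
      have hClt : (c * μ) % ((p^r:ℕ):ℤ) < ((p^r:ℕ):ℤ) := Int.emod_lt_of_pos _ hPpos
      have hCmod : (c * μ) % ((p^r:ℕ):ℤ) ≡ c * μ [ZMOD ((p^r:ℕ):ℤ)] :=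
        Int.emod_emod_of_dvd _ dvd_rfl
      obtain ⟨z, hz⟩ := modeq_ex hCmod
      set C := (c * μ) % ((p^r:ℕ):ℤ) with hCdef
      have hPdvd : ((p^(r-r'+1):ℕ):ℤ) ∣ ((p^r:ℕ):ℤ) :=
        Int.natCast_dvd_natCast.2 (pow_dvd_pow p (by omega))
      have hdvdC : ((p^(r-r'+1):ℕ):ℤ) ∣ C := by
        rw [hz]
        exact dvd_add (Dvd.dvd.mul_right hdvd2 μ) (Dvd.dvd.mul_right hPdvd z)
      rw [hsplit] at hz
      obtain ⟨w0, hw0⟩ := hdvdC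
      have hw00 : 0 ≤ w0 := by
        by_contra hneg
        push_neg at hneg
        have hpos : (0:ℤ) < ((p^(r-r'+1):ℕ):ℤ) := by positivity
        nlinarith [hC0]
      set w : ℕ := w0.toNat with hwdef
      have hwℤ : (w:ℤ) = w0 := Int.toNat_of_nonneg hw00
      have hCw : C = (p:ℤ)^(r-r') * (p:ℤ) * (w:ℤ) := by
        rw [hwℤ, hw0, ecast2]
      have hwlt : w < p^(r'-1) := by
        have hlt : (p:ℤ)^(r-r') * (p:ℤ) * (w:ℤ) < ((p^r:ℕ):ℤ) := hCw ▸ hClt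
        have he : ((p^r:ℕ):ℤ) = (p:ℤ)^(r-r') * (p:ℤ) * ((p^(r'-1):ℕ):ℤ) := by
          push_cast
          rw [← pow_succ, ← pow_add]
          congr 1
          omega
        rw [he] at hlt
        have hmul : (0:ℤ) < (p:ℤ)^(r-r') * (p:ℤ) := by positivity
        have := lt_of_mul_lt_mul_left hlt (le_of_lt hmul)
        exact_mod_cast this
      refine ⟨w, hwlt, ?_⟩
      have hMc : Mgcd (p^r) (p^r') c = (p:ℤ)^(r-r') := by
        apply Mgcd_top hp hrr
        exact dvd_trans ⟨(p:ℤ), by push_cast; ring⟩ hdvd2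
      have hdc : ((p:ℤ)^(r-r')) ∣ c := by
        have h2 : ((p^(r-r'):ℕ):ℤ) ∣ c := dvd_trans ⟨(p:ℤ), by push_cast; ring⟩ hdvd2
        have h3 : ((p^(r-r'):ℕ):ℤ) = (p:ℤ)^(r-r') := by push_cast; ring
        rwa [h3] at h2
      obtain ⟨γ, hγ⟩ := hdc
      have hgc : c / ((p:ℤ)^(r-r')) = γ := by
        rw [hγ, Int.mul_ediv_cancel_left _ hpne]
      have hMC : Mgcd (p^r) (p^r') ((p:ℤ)^(r-r'+1) * (w:ℤ)) = (p:ℤ)^(r-r') := by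
        apply Mgcd_top hp hrr
        refine ⟨(p:ℤ) * (w:ℤ), ?_⟩
        push_cast
        ring
      have hgC : ((p:ℤ)^(r-r'+1) * (w:ℤ)) / ((p:ℤ)^(r-r')) = (p:ℤ) * (w:ℤ) := by
        have he : (p:ℤ)^(r-r'+1) * (w:ℤ) = (p:ℤ)^(r-r') * ((p:ℤ) * (w:ℤ)) := by ring
        rw [he, Int.mul_ediv_cancel_left _ hpne]
      have hkey : (p:ℤ) * (w:ℤ) = γ * μ + ((p^r':ℕ):ℤ) * z :=
        mul_left_cancel₀ hpne (by linear_combination (-1:ℤ)*hCw + hz + μ*hγ)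
      refine (H1_eq_H1_iff _ _ _ _ _ _).2 ⟨?_, ?_⟩
      · rw [hMc, hMC, hgc, hgC, etop, etop]
        refine Lp_eq' _ _ μ a ?_ ?_ ?_ ?_
        · rw [mul_comm]
          exact hμr
        · refine modeq_of_ex z ?_
          linear_combination hkey
        · exact modeq_of_ex 0 (by ring)
        · refine modeq_of_ex (-(γ*(p:ℤ)^(r-r')*za) - a*z) ?_
          linear_combination (-a)*hkey + (-γ)*hza
      · refine Lp_eq' _ _ μ a ?_ ?_ ?_ ?_
        · refine modeq_of_ex (-z) ?_
          rw [hsplit]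
          linear_combination (-1:ℤ)*hz + hCw
        · refine modeq_of_ex ((p:ℤ)^(r-r')*za) ?_
          linear_combination hza
        · refine modeq_of_ex ((p:ℤ)^(r-r')*γ*za + a*z) ?_
          rw [hsplit]
          linear_combination ((p:ℤ)^(r-r')*a)*hkey + ((p:ℤ)^(r-r')*γ)*hza +
            (-1:ℤ)*hγ
        · exact modeq_of_ex 0 (by ring)
    · -- middle branch
      right; left
      have hcne : c ≠ 0 := by rintro rfl; exact hdvd2 (dvd_zero _)
      have hcn : c = ((c.toNat : ℕ):ℤ) := (Int.toNat_of_nonneg hc0).symm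
      have hn₀ : c.toNat ≠ 0 := by
        intro h0
        rw [h0] at hcn
        exact hcne (by exact_mod_cast hcn)
      have hpn₀ : p ∣ c.toNat := by
        have := hpc
        rw [hcn] at this
        exact_mod_cast this
      set k := (c.toNat).factorization p with hkdef
      have hfac : p^k * (c.toNat / p^k) = c.toNat := Nat.ordProj_mul_ordCompl_eq_self _ p
      have hd₀ : ¬ p ∣ (c.toNat / p^k) := Nat.not_dvd_ordCompl hp hn₀
      have hk1 : 1 ≤ k := hp.factorization_pos_of_dvd hn₀ hpn₀
      have hkr : k ≤ r - r' := by
        by_contra hgt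
        push_neg at hgt
        have hdd : p^(r-r'+1) ∣ c.toNat :=
          dvd_trans (pow_dvd_pow p (by omega)) (Nat.ordProj_dvd _ p)
        apply hdvd2
        rw [hcn]
        exact_mod_cast Int.natCast_dvd_natCast.2 hdd
      set d : ℤ := ((c.toNat / p^k : ℕ) : ℤ) with hddef
      have hc_eq : c = (p:ℤ)^k * d := by
        rw [hcn, ← hfac, Nat.cast_mul, Nat.cast_pow, ← hddef]
      have hpd : ¬ (p:ℤ) ∣ d := by
        intro hcon
        rw [hddef] at hcon
        exact hd₀ (by exact_mod_cast hcon)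
      obtain ⟨μd, hμdr, hμdr'⟩ := exists_inv' hp hpd hrr
      obtain ⟨zd, hzd⟩ := modeq_ex hμdr
      rw [hsplit] at hzd
      have hU0 : 0 ≤ (d * μ) % ((p^r':ℕ):ℤ) := Int.emod_nonneg _ (by omega)
      have hUlt : (d * μ) % ((p^r':ℕ):ℤ) < ((p^r':ℕ):ℤ) := Int.emod_lt_of_pos _ hP'pos
      have hUmod : (d * μ) % ((p^r':ℕ):ℤ) ≡ d * μ [ZMOD ((p^r':ℕ):ℤ)] :=
        Int.emod_emod_of_dvd _ dvd_rfl
      obtain ⟨zU, hzU⟩ := modeq_ex hUmod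
      set u : ℕ := ((d * μ) % ((p^r':ℕ):ℤ)).toNat with hudef
      have huℤ : (u:ℤ) = (d * μ) % ((p^r':ℕ):ℤ) := Int.toNat_of_nonneg hU0
      have hult : u < p^r' := by
        have := hUlt
        rw [← huℤ] at this
        exact_mod_cast this
      have hP'p : (p:ℤ) ∣ ((p^r':ℕ):ℤ) := by
        push_cast
        exact dvd_pow_self _ (by omega)
      have hpu : ¬ p ∣ u := by
        intro hcon
        have hconz : (p:ℤ) ∣ (u:ℤ) := Int.natCast_dvd_natCast.2 hcon
        rw [huℤ, hzU] at hconz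
        have hdμ : (p:ℤ) ∣ d * μ := by
          have : d * μ = (d * μ + ((p^r':ℕ):ℤ) * zU) - ((p^r':ℕ):ℤ) * zU := by ring
          rw [this]
          exact dvd_sub hconz (Dvd.dvd.mul_right hP'p zU)
        have hpz : Prime (p:ℤ) := Nat.prime_iff_prime_int.mp hp
        rcases hpz.dvd_mul.1 hdμ with hdd | hdd
        · exact hpd hdd
        · apply p_not_dvd_one hp
          have : (1:ℤ) = a * μ - (p:ℤ)^(r-r') * ((p^r':ℕ):ℤ) * za := by
            rw [hza]; ring
          rw [this]
          refine dvd_sub (Dvd.dvd.mul_left hdd a) ?_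
          exact Dvd.dvd.mul_right (Dvd.dvd.mul_left hP'p _) za
      obtain ⟨μu, hμur, hμur'⟩ := exists_inv' hp (fun hcon =>
        hpu (Int.natCast_dvd_natCast.1 hcon)) hrr
      obtain ⟨zu, hzu⟩ := modeq_ex hμur
      rw [hsplit] at hzu
      set T0 : ℤ := -(d*(p:ℤ)^(r-r')*za) - a*zU with hT0def
      have hdau : d = a*(u:ℤ) + ((p^r':ℕ):ℤ)*T0 := by
        rw [hT0def]
        linear_combination (-a)*huℤ + (-a)*hzU + (-d)*hza
      refine ⟨k, u, hk1, hkr, hult, hpu, ?_⟩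
      have hpkne : ((p:ℤ)^k) ≠ 0 := by positivity
      have hMc : Mgcd (p^r) (p^r') c = (p:ℤ)^k := Mgcd_mid hp hrr hkr hc_eq hpd
      have hMrep : Mgcd (p^r) (p^r') ((p:ℤ)^k * (u:ℤ)) = (p:ℤ)^k :=
        Mgcd_mid hp hrr hkr rfl (fun hcon => hpu (Int.natCast_dvd_natCast.1 hcon))
      have hgd : c / ((p:ℤ)^k) = d := by
        rw [hc_eq, Int.mul_ediv_cancel_left _ hpkne]
      have hgu : ((p:ℤ)^k * (u:ℤ)) / ((p:ℤ)^k) = (u:ℤ) :=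
        Int.mul_ediv_cancel_left _ hpkne
      refine (H1_eq_H1_iff _ _ _ _ _ _).2 ⟨?_, ?_⟩
      · rw [hMc, hMrep, hgd, hgu, coefdiv hp hrr hkr]
        refine Lp_eq' _ _ μ a ?_ ?_ ?_ ?_
        · refine modeq_of_ex ((p:ℤ)^(r-r'-k)*za) ?_
          rw [hsplit]
          linear_combination ((p:ℤ)^(r-r'-k))*hza
        · refine modeq_of_ex zU ?_
          linear_combination huℤ + hzU
        · exact modeq_of_ex 0 (by ring)
        · refine modeq_of_ex T0 ?_
          linear_combination hdau
      · refine Lp_eq' _ _ (μ + ((p^r':ℕ):ℤ)*zU*μd) (a + ((p^r':ℕ):ℤ)*T0*μu) ?_ ?_ ?_ ?_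
        · refine modeq_of_ex ((p:ℤ)^k*((p^r':ℕ):ℤ)*zU*zd) ?_
          rw [hsplit]
          linear_combination (μ + ((p^r':ℕ):ℤ)*zU*μd)*hc_eq +
            ((p:ℤ)^k*((p^r':ℕ):ℤ)*zU)*hzd + (-(p:ℤ)^k)*hzU + (-(p:ℤ)^k)*huℤ
        · refine modeq_of_ex ((p:ℤ)^(r-r')*za + zU*μd*a) ?_
          linear_combination hza
        · refine modeq_of_ex ((p:ℤ)^k*((p^r':ℕ):ℤ)*T0*zu) ?_
          rw [hsplit]
          linear_combination (-(p:ℤ)^k)*hdau + ((p:ℤ)^k*((p^r':ℕ):ℤ)*T0)*hzu +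
            (-1:ℤ)*hc_eq
        · exact modeq_of_ex (T0*μu) (by ring)
  · -- p ∤ c : branch 0
    left
    obtain ⟨μ, hμr, hμr'⟩ := exists_inv' hp hpc hrr
    obtain ⟨zw, hzw⟩ := modeq_ex hμr'
    have hT0 : 0 ≤ (a * μ) % ((p^r':ℕ):ℤ) := Int.emod_nonneg _ (by omega)
    have hTlt : (a * μ) % ((p^r':ℕ):ℤ) < ((p^r':ℕ):ℤ) := Int.emod_lt_of_pos _ hP'pos
    have hTmod : (a * μ) % ((p^r':ℕ):ℤ) ≡ a * μ [ZMOD ((p^r':ℕ):ℤ)] :=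
      Int.emod_emod_of_dvd _ dvd_rfl
    obtain ⟨z, hz⟩ := modeq_ex hTmod
    set t : ℕ := ((a * μ) % ((p^r':ℕ):ℤ)).toNat with htdef
    have htn : (t:ℤ) = (a * μ) % ((p^r':ℕ):ℤ) := Int.toNat_of_nonneg hT0
    have htlt : t < p^r' := by
      have := hTlt
      rw [← htn] at this
      exact_mod_cast this
    refine ⟨t, htlt, ?_⟩
    have hMc : Mgcd (p^r) (p^r') c = 1 := Mgcd_one hp hrr hpc
    have hM1 : Mgcd (p^r) (p^r') 1 = 1 := Mgcd_one hp hrr (p_not_dvd_one hp)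
    refine (H1_eq_H1_iff _ _ _ _ _ _).2 ⟨?_, ?_⟩
    · rw [hMc, hM1, Int.ediv_one, Int.ediv_one, ezero, ezero]
      refine Lp_eq' _ _ μ c ?_ ?_ ?_ ?_
      · refine modeq_of_ex (-z) ?_
        rw [hsplit]
        linear_combination (-(p:ℤ)^(r-r'))*htn + (-(p:ℤ)^(r-r'))*hz
      · refine modeq_of_ex (-zw) ?_
        linear_combination (-1:ℤ)*hzw
      · refine modeq_of_ex (a*zw + c*z) ?_
        rw [hsplit]
        linear_combination ((p:ℤ)^(r-r')*c)*htn + ((p:ℤ)^(r-r')*c)*hz +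
          ((p:ℤ)^(r-r')*a)*hzw
      · exact modeq_of_ex 0 (by ring)
    · refine Lp_eq' _ _ μ c ?_ ?_ ?_ ?_
      · rw [mul_comm]
        exact hμr
      · refine modeq_of_ex (-z) ?_
        linear_combination (-1:ℤ)*htn + (-1:ℤ)*hz
      · exact modeq_of_ex 0 (by ring)
      · refine modeq_of_ex (a*zw + c*z) ?_
        linear_combination c*htn + c*hz + a*hzw

end Reduce

section Inj

variable {p r r' : ℕ}

lemma nat_eq_of_dvd {x y n : ℕ} (hx : x < n) (hy : y < n)
    (h : ((n:ℕ):ℤ) ∣ (x:ℤ) - (y:ℤ)) : x = y := by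
  obtain ⟨m, hm⟩ := h
  have hxn : (x:ℤ) < n := by exact_mod_cast hx
  have hyn : (y:ℤ) < n := by exact_mod_cast hy
  have hx0 : (0:ℤ) ≤ x := Int.natCast_nonneg x
  have hy0 : (0:ℤ) ≤ y := Int.natCast_nonneg y
  have hn0 : (0:ℤ) < n := by omega
  have h3 : (n:ℤ)*m < n*1 := by rw [mul_one]; linarith
  have h4 : (n:ℤ)*(-1) < n*m := by
    have he : (n:ℤ)*(-1) = -n := by ring
    rw [he]; linarith
  have hm1 : m < 1 := lt_of_mul_lt_mul_left h3 (le_of_lt hn0)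
  have hm2 : -1 < m := lt_of_mul_lt_mul_left h4 (le_of_lt hn0)
  have hm0 : m = 0 := by omega
  rw [hm0, mul_zero] at hm
  omega

lemma inj0 (hp : p.Prime) (h1 : 1 ≤ r') (hrr : r' ≤ r) {t t' : ℕ}
    (ht : t < p^r') (ht' : t' < p^r')
    (h : H1 (p^r) (p^r') (t:ℤ) 1 = H1 (p^r) (p^r') (t':ℤ) 1) : t = t' := by
  have hsplit : ((p^r:ℕ):ℤ) = (p:ℤ)^(r-r') * ((p^r':ℕ):ℤ) := by
    push_cast; rw [← pow_add]; congr 1; omega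
  have hT := ((H1_eq_H1_iff _ _ _ _ _ _).1 h).2
  obtain ⟨n, hn1, hn2⟩ := Lp_eq_elim _ _ hT
  obtain ⟨z1, hz1⟩ := modeq_ex hn1
  rw [hsplit] at hz1
  obtain ⟨z2, hz2⟩ := modeq_ex hn2
  apply nat_eq_of_dvd ht ht'
  exact ⟨-((p:ℤ)^(r-r') * z1 * t) + z2, by linear_combination (-(t:ℤ))*hz1 + hz2⟩

lemma inj_0k (hp : p.Prime) (h1 : 1 ≤ r') (hrr : r' ≤ r) {t : ℕ} {x : ℤ}
    (hx : (p:ℤ) ∣ x)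
    (h : H1 (p^r) (p^r') (t:ℤ) 1 = H1 (p^r) (p^r') 1 x) : False := by
  have hT := ((H1_eq_H1_iff _ _ _ _ _ _).1 h).2
  obtain ⟨n, hn1, hn2⟩ := Lp_eq_elim _ _ hT.symm
  have hpP : (p:ℤ) ∣ ((p^r:ℕ):ℤ) := by
    push_cast; exact dvd_pow_self _ (by omega)
  exact pdvd_contra hp hn1 hpP (Dvd.dvd.mul_left hx n)

lemma klt_contra (hp : p.Prime) (h1 : 1 ≤ r') (hrr : r' ≤ r) {k k' : ℕ} {u u' : ℤ}
    (hkk' : k < k') (hk'r : k' ≤ r) (hu : ¬ (p:ℤ) ∣ u)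
    (h : H1 (p^r) (p^r') 1 ((p:ℤ)^k * u) = H1 (p^r) (p^r') 1 ((p:ℤ)^k' * u')) :
    False := by
  have hT := ((H1_eq_H1_iff _ _ _ _ _ _).1 h).2
  obtain ⟨n, hn1, hn2⟩ := Lp_eq_elim _ _ hT
  have hP'p : (p:ℤ) ∣ ((p^r':ℕ):ℤ) := by
    push_cast; exact dvd_pow_self _ (by omega)
  have hpn : ¬ (p:ℤ) ∣ n := by
    intro hcon
    obtain ⟨z1, hz1⟩ := modeq_ex hn2
    apply p_not_dvd_one hp
    have he : (1:ℤ) = n * 1 - ((p^r':ℕ):ℤ)*z1 := by rw [hz1]; ring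
    rw [he]
    exact dvd_sub (Dvd.dvd.mul_right hcon 1) (Dvd.dvd.mul_right hP'p z1)
  obtain ⟨z2, hz2⟩ := modeq_ex hn1
  have hdd : (p:ℤ)^k * ((p:ℤ) * (n * u)) ∣ 0 ∨ True := Or.inr trivial
  have hkey : (p:ℤ)^k * (p:ℤ) ∣ (p:ℤ)^k * (n * u) := by
    have he : (p:ℤ)^k * (n * u) = (p:ℤ)^k' * u' + ((p^r:ℕ):ℤ) * z2 := by
      linear_combination hz2
    rw [he]
    refine dvd_add ?_ ?_
    · refine Dvd.dvd.mul_right ?_ u'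
      have : (p:ℤ)^k * (p:ℤ) = (p:ℤ)^(k+1) := by ring
      rw [this]
      exact pow_dvd_pow _ hkk'
    · refine Dvd.dvd.mul_right ?_ z2
      have h2 : ((p^r:ℕ):ℤ) = (p:ℤ)^r := by push_cast; ring
      have : (p:ℤ)^k * (p:ℤ) = (p:ℤ)^(k+1) := by ring
      rw [this, h2]
      exact pow_dvd_pow _ (by omega)
  have hpknz : ((p:ℤ)^k) ≠ 0 := by have := hp.pos; positivity
  have hpnu : (p:ℤ) ∣ n * u := (mul_dvd_mul_iff_left hpknz).1 hkey
  have hpz : Prime (p:ℤ) := Nat.prime_iff_prime_int.mp hp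
  rcases hpz.dvd_mul.1 hpnu with hd | hd
  · exact hpn hd
  · exact hu hd

lemma keq_cong (hp : p.Prime) (h1 : 1 ≤ r') (hrr : r' ≤ r) {k : ℕ} {u u' : ℤ}
    (hkr : k ≤ r)
    (h : H1 (p^r) (p^r') 1 ((p:ℤ)^k * u) = H1 (p^r) (p^r') 1 ((p:ℤ)^k * u')) :
    ((p^(min r' (r-k)) : ℕ):ℤ) ∣ u - u' := by
  have hT := ((H1_eq_H1_iff _ _ _ _ _ _).1 h).2
  obtain ⟨n, hn1, hn2⟩ := Lp_eq_elim _ _ hT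
  obtain ⟨z1, hz1⟩ := modeq_ex hn2
  obtain ⟨z2, hz2⟩ := modeq_ex hn1
  have hpknz : ((p:ℤ)^k) ≠ 0 := by have := hp.pos; positivity
  have hPkk : ((p^r:ℕ):ℤ) = (p:ℤ)^k * (p:ℤ)^(r-k) := by
    push_cast; rw [← pow_add]; congr 1; omega
  have hcan : n*u - u' = (p:ℤ)^(r-k) * z2 :=
    mul_left_cancel₀ hpknz (by linear_combination hz2 + z2*hPkk)
  have he : u - u' = (p:ℤ)^(r-k)*z2 - ((p^r':ℕ):ℤ)*(z1*u) := by
    linear_combination hcan + (-u)*hz1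
  rw [he]
  refine dvd_sub ?_ ?_
  · refine Dvd.dvd.mul_right ?_ z2
    have hc : ((p^(min r' (r-k)) : ℕ):ℤ) = (p:ℤ)^(min r' (r-k)) := by push_cast; ring
    rw [hc]
    exact pow_dvd_pow _ (min_le_right _ _)
  · exact Dvd.dvd.mul_right
      (Int.natCast_dvd_natCast.2 (pow_dvd_pow p (min_le_left _ _))) _

end Inj

section Sigma

variable (N N' : ℕ)

/-- swap the last two coordinates. -/
def σequiv : Dty N N' ≃+ Dty N N' where
  toFun y := (y.1, (y.2.2, y.2.1))
  invFun y := (y.1, (y.2.2, y.2.1))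
  left_inv y := rfl
  right_inv y := rfl
  map_add' x y := rfl

lemma H2_eq_map (a c : ℤ) :
    H2 N N' a c = (H1 N N' (-a) c).map (σequiv N N').toAddMonoidHom := by
  rw [H2_eq, H1_eq, AddSubgroup.map_map]
  have hcomp : (σequiv N N').toAddMonoidHom.comp (Eequiv N N').toAddMonoidHom =
      (Fequiv N N').toAddMonoidHom := by
    apply AddMonoidHom.ext
    intro x
    rfl
  rw [hcomp]
  congr 2
  have he : (N : ℤ) / ((N' : ℤ) * Mgcd N N' c) * (-a) =
      -((N : ℤ) / ((N' : ℤ) * Mgcd N N' c) * a) := by ring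
  rw [he, Lp_neg]

end Sigma

section Final

open Finset
open scoped Classical

variable (p r r' : ℕ)

/-- index set of canonical representatives. -/
def Iset : Finset (ℕ × ℕ) :=
  (({0} : Finset ℕ) ×ˢ range (p^r')) ∪
  ((Icc 1 (r-r')) ×ˢ ((range (p^r')).filter (fun u => ¬ p ∣ u))) ∪
  (({r-r'+1} : Finset ℕ) ×ˢ range (p^(r'-1)))

/-- canonical representatives. -/
def gmap : ℕ × ℕ → AddSubgroup (Dty (p^r) (p^r')) := fun ku =>
  if ku.1 = 0 then H1 (p^r) (p^r') (ku.2 : ℤ) 1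
  else H1 (p^r) (p^r') 1 ((p:ℤ)^ku.1 * (ku.2 : ℤ))

lemma mem_Iset {ku : ℕ × ℕ} : ku ∈ Iset p r r' ↔
    (ku.1 = 0 ∧ ku.2 < p^r') ∨
    (1 ≤ ku.1 ∧ ku.1 ≤ r-r' ∧ ku.2 < p^r' ∧ ¬ p ∣ ku.2) ∨
    (ku.1 = r-r'+1 ∧ ku.2 < p^(r'-1)) := by
  obtain ⟨k, u⟩ := ku
  simp only [Iset, Finset.mem_union, Finset.mem_product, Finset.mem_singleton,
    Finset.mem_range, Finset.mem_Icc, Finset.mem_filter]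
  tauto

lemma card_Iset (hp : p.Prime) (h1 : 1 ≤ r') (hrr : r' ≤ r) :
    (Iset p r r').card = p^r' + (r-r') * (p^(r'-1)*(p-1)) + p^(r'-1) := by
  rw [Iset]
  rw [Finset.card_union_of_disjoint, Finset.card_union_of_disjoint]
  · rw [Finset.card_product, Finset.card_product, Finset.card_product,
      Finset.card_singleton, Finset.card_range, Finset.card_singleton,
      Finset.card_range, Nat.card_Icc]
    have hfil : ((range (p^r')).filter (fun u => ¬ p ∣ u)).card = (p^r').totient := by
      rw [Nat.totient]
      congr 1
      apply Finset.filter_congr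
      intro x _
      rw [Nat.coprime_pow_left_iff (by omega), Nat.Prime.coprime_iff_not_dvd hp]
    rw [hfil, Nat.totient_prime_pow hp (by omega)]
    have he : r - r' + 1 - 1 = r - r' := by omega
    rw [he]
    ring
  · rw [Finset.disjoint_left]
    rintro ⟨k, u⟩ hk hk'
    simp only [Finset.mem_product, Finset.mem_singleton, Finset.mem_Icc] at hk hk'
    omega
  · rw [Finset.disjoint_left]
    rintro ⟨k, u⟩ hk hk'
    simp only [Finset.mem_union, Finset.mem_product, Finset.mem_singleton,
      Finset.mem_Icc] at hk hk'
    omega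

variable {p r r'}

lemma S1_eq (hp : p.Prime) (h1 : 1 ≤ r') (hrr : r' ≤ r) :
    {H : AddSubgroup (Dty (p^r) (p^r')) |
        ∃ a c : ℤ, Int.gcd a c = 1 ∧ 0 ≤ c ∧ H = H1 (p^r) (p^r') a c} =
      ↑((Iset p r r').image (gmap p r r')) := by
  ext H
  simp only [Set.mem_setOf_eq, Finset.coe_image, Set.mem_image, Finset.mem_coe]
  constructor
  · rintro ⟨a, c, hcop, hc0, rfl⟩
    rcases reduce hp h1 hrr hcop hc0 with ⟨t, ht, he⟩ |
      ⟨k, u, hk1, hkr, hult, hpu, he⟩ | ⟨w, hw, he⟩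
    · refine ⟨(0, t), ?_, ?_⟩
      · rw [mem_Iset]
        exact Or.inl ⟨rfl, ht⟩
      · simp only [gmap, if_pos]
        exact he.symm
    · refine ⟨(k, u), ?_, ?_⟩
      · rw [mem_Iset]
        exact Or.inr (Or.inl ⟨hk1, hkr, hult, hpu⟩)
      · simp only [gmap]
        rw [if_neg (by omega : ¬ (k, u).1 = 0)]
        exact he.symm
    · refine ⟨(r-r'+1, w), ?_, ?_⟩
      · rw [mem_Iset]
        exact Or.inr (Or.inr ⟨rfl, hw⟩)
      · simp only [gmap]
        rw [if_neg (by omega : ¬ (r-r'+1, w).1 = 0)]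
        exact he.symm
  · rintro ⟨⟨k, u⟩, hmem, rfl⟩
    rw [mem_Iset] at hmem
    rcases hmem with ⟨hk0, hu⟩ | ⟨hk1, hkr, hu, hpu⟩ | ⟨hkeq, hu⟩
    · refine ⟨(u:ℤ), 1, (by simp), by norm_num, ?_⟩
      simp only [gmap]
      rw [if_pos hk0]
    · refine ⟨1, (p:ℤ)^k * (u:ℤ), (by simp), by positivity, ?_⟩
      simp only [gmap]
      rw [if_neg (by omega : ¬ (k, u).1 = 0)]
    · refine ⟨1, (p:ℤ)^k * (u:ℤ), (by simp), by positivity, ?_⟩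
      simp only [gmap]
      rw [if_neg (by omega : ¬ (k, u).1 = 0)]

lemma gmap_injOn (hp : p.Prime) (h1 : 1 ≤ r') (hrr : r' ≤ r) :
    Set.InjOn (gmap p r r') ↑(Iset p r r') := by
  rintro ⟨k, u⟩ hmem ⟨k', u'⟩ hmem' heq
  rw [Finset.mem_coe, mem_Iset] at hmem hmem'
  have hcast : ∀ {v : ℕ}, ¬ p ∣ v → ¬ (p:ℤ) ∣ (v:ℤ) := by
    intro v hv hcon
    exact hv (by exact_mod_cast hcon)
  rcases hmem with ⟨hk0, hult⟩ | ⟨hk1, hkr, hult, hpu⟩ | ⟨hkeq, hult⟩ <;>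
    rcases hmem' with ⟨hk0', hult'⟩ | ⟨hk1', hkr', hult', hpu'⟩ | ⟨hkeq', hult'⟩
  · -- 0 0
    subst hk0; subst hk0'
    simp only [gmap, if_pos] at heq
    exact congrArg (Prod.mk 0) (inj0 hp h1 hrr hult hult' heq)
  · -- 0 B
    subst hk0
    simp only [gmap, if_pos] at heq
    rw [if_neg (by omega : ¬ (k', u').1 = 0)] at heq
    exact absurd heq (fun h => inj_0k hp h1 hrr
      (dvd_mul_of_dvd_left (dvd_pow_self _ (by omega)) _) h)
  · -- 0 C
    subst hk0
    simp only [gmap, if_pos] at heq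
    rw [if_neg (by omega : ¬ (k', u').1 = 0)] at heq
    exact absurd heq (fun h => inj_0k hp h1 hrr
      (dvd_mul_of_dvd_left (dvd_pow_self _ (by omega)) _) h)
  · -- B 0
    subst hk0'
    simp only [gmap, if_pos] at heq
    rw [if_neg (by omega : ¬ (k, u).1 = 0)] at heq
    exact absurd heq.symm (fun h => inj_0k hp h1 hrr
      (dvd_mul_of_dvd_left (dvd_pow_self _ (by omega)) _) h)
  · -- B B
    simp only [gmap] at heq
    rw [if_neg (by omega : ¬ (k, u).1 = 0), if_neg (by omega : ¬ (k', u').1 = 0)] at heq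
    rcases lt_trichotomy k k' with hlt | hkk | hgt
    · exact absurd heq (fun h => klt_contra hp h1 hrr hlt (by omega) (hcast hpu) h)
    · subst hkk
      have hdvd := keq_cong hp h1 hrr (by omega : k ≤ r) heq
      rw [(by omega : min r' (r - k) = r')] at hdvd
      exact congrArg (Prod.mk k) (nat_eq_of_dvd hult hult' hdvd)
    · exact absurd heq.symm
        (fun h => klt_contra hp h1 hrr hgt (by omega) (hcast hpu') h)
  · -- B C
    simp only [gmap] at heq
    rw [if_neg (by omega : ¬ (k, u).1 = 0), if_neg (by omega : ¬ (k', u').1 = 0)] at heq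
    exact absurd heq
      (fun h => klt_contra hp h1 hrr (by omega) (by omega) (hcast hpu) h)
  · -- C 0
    subst hk0'
    simp only [gmap, if_pos] at heq
    rw [if_neg (by omega : ¬ (k, u).1 = 0)] at heq
    exact absurd heq.symm (fun h => inj_0k hp h1 hrr
      (dvd_mul_of_dvd_left (dvd_pow_self _ (by omega)) _) h)
  · -- C B
    simp only [gmap] at heq
    rw [if_neg (by omega : ¬ (k, u).1 = 0), if_neg (by omega : ¬ (k', u').1 = 0)] at heq
    exact absurd heq.symm
      (fun h => klt_contra hp h1 hrr (by omega) (by omega) (hcast hpu') h)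
  · -- C C
    subst hkeq; subst hkeq'
    simp only [gmap] at heq
    rw [if_neg (by omega : ¬ ((r-r'+1 : ℕ), u).1 = 0),
      if_neg (by omega : ¬ ((r-r'+1 : ℕ), u').1 = 0)] at heq
    have hdvd := keq_cong hp h1 hrr (by omega : r-r'+1 ≤ r) heq
    rw [(by omega : min r' (r - (r-r'+1)) = r' - 1)] at hdvd
    exact congrArg (Prod.mk (r-r'+1)) (nat_eq_of_dvd hult hult' hdvd)

end Final

end Stmt5

open Stmt5 in
/-- the number of distinct self-dual isotropic subgroups of
`(ℤ/p^rℤ)² ⊕ (ℤ/p^{r'}ℤ)²` of the form `H¹_{a,c}` or `H²_{a,c}` equals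
`2((r - r' + 1)p^{r'} - (r - r' - 1)p^{r'-1})`. -/
theorem stmt5 (p r r' : ℕ) (hp : p.Prime) (h1 : 1 ≤ r') (hrr : r' ≤ r) :
    (Nat.card {H : AddSubgroup (Dty (p ^ r) (p ^ r')) |
        ∃ a c : ℤ, Int.gcd a c = 1 ∧ 0 ≤ c ∧
          (H = H1 (p ^ r) (p ^ r') a c ∨ H = H2 (p ^ r) (p ^ r') a c)} : ℤ) =
      2 * (((r : ℤ) - (r' : ℤ) + 1) * (p : ℤ) ^ r' - ((r : ℤ) - (r' : ℤ) - 1) * (p : ℤ) ^ (r' - 1)) := by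
  classical
  haveI : NeZero (p^r) := ⟨(pow_pos hp.pos r).ne'⟩
  haveI : NeZero (p^r') := ⟨(pow_pos hp.pos r').ne'⟩
  haveI : Finite (AddSubgroup (Dty (p^r) (p^r'))) :=
    Finite.of_injective _ SetLike.coe_injective
  set S1 : Set (AddSubgroup (Dty (p^r) (p^r'))) :=
    {H | ∃ a c : ℤ, Int.gcd a c = 1 ∧ 0 ≤ c ∧ H = H1 (p^r) (p^r') a c} with hS1
  set S2 : Set (AddSubgroup (Dty (p^r) (p^r'))) :=
    {H | ∃ a c : ℤ, Int.gcd a c = 1 ∧ 0 ≤ c ∧ H = H2 (p^r) (p^r') a c} with hS2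
  have hSeq : {H : AddSubgroup (Dty (p^r) (p^r')) | ∃ a c : ℤ, Int.gcd a c = 1 ∧
      0 ≤ c ∧ (H = H1 (p^r) (p^r') a c ∨ H = H2 (p^r) (p^r') a c)} = S1 ∪ S2 := by
    ext H
    constructor
    · rintro ⟨a, c, ha, hc, hor | hor⟩
      · exact Or.inl ⟨a, c, ha, hc, hor⟩
      · exact Or.inr ⟨a, c, ha, hc, hor⟩
    · rintro (⟨a, c, ha, hc, hor⟩ | ⟨a, c, ha, hc, hor⟩)
      · exact ⟨a, c, ha, hc, Or.inl hor⟩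
      · exact ⟨a, c, ha, hc, Or.inr hor⟩
  have hS1eq : S1 = ↑((Iset p r r').image (gmap p r r')) := S1_eq hp h1 hrr
  have hdisj : Disjoint S1 S2 := by
    rw [Set.disjoint_left]
    rintro H ⟨a, c, hcop, hc0, rfl⟩ ⟨a', c', hcop', hc0', heq⟩
    exact H1_ne_H2 hp h1 hrr hcop hcop' heq
  have hS2eq : S2 = (fun H => H.map (σequiv (p^r) (p^r')).toAddMonoidHom) '' S1 := by
    ext H
    constructor
    · rintro ⟨a, c, hcop, hc0, rfl⟩
      exact ⟨H1 (p^r) (p^r') (-a) c,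
        ⟨-a, c, by rw [gcd_neg_left]; exact hcop, hc0, rfl⟩,
        (H2_eq_map _ _ _ _).symm⟩
    · rintro ⟨H', ⟨a, c, hcop, hc0, rfl⟩, rfl⟩
      refine ⟨-a, c, by rw [gcd_neg_left]; exact hcop, hc0, ?_⟩
      rw [H2_eq_map, neg_neg]
  have hcount : Nat.card {H : AddSubgroup (Dty (p^r) (p^r')) | ∃ a c : ℤ,
      Int.gcd a c = 1 ∧ 0 ≤ c ∧
        (H = H1 (p^r) (p^r') a c ∨ H = H2 (p^r) (p^r') a c)} =
      (Iset p r r').card + (Iset p r r').card := by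
    rw [hSeq, Nat.card_coe_set_eq,
      Set.ncard_union_eq hdisj (Set.toFinite _) (Set.toFinite _)]
    have hc1 : S1.ncard = (Iset p r r').card := by
      rw [hS1eq, Set.ncard_coe_finset, Finset.card_image_of_injOn (gmap_injOn hp h1 hrr)]
    have hc2 : S2.ncard = S1.ncard := by
      rw [hS2eq]
      exact Set.ncard_image_of_injective _
        (AddSubgroup.map_injective (σequiv (p^r) (p^r')).injective)
    rw [hc2, hc1]
  rw [hcount, card_Iset p r r' hp h1 hrr]
  have e1 : ((r - r' : ℕ):ℤ) = (r:ℤ) - r' := by omega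
  have e2 : ((p - 1 : ℕ):ℤ) = (p:ℤ) - 1 := by
    have := hp.pos
    omega
  have e3 : (p:ℤ)^r' = (p:ℤ)^(r'-1) * p := by
    rw [← pow_succ]
    congr 1
    omega
  push_cast [e1, e2]
  rw [e3]
  ring
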